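/- Let E and F be coherence spaces and let t be a morphism of the Kleisli category of the Girard exponential, i.e. a clique of !E ⊸ F. Let x be a clique of E, let E_x be the coherence space with web {a′ ∈ |E| : ∀a ∈ x, a ¨_E a′ and a ≠ a′} and coherence inherited from E, and let t′(x) = {(a′, b) ∈ |E_x| × |F| : ∃ x₀ ⊆ x, (x₀ ∪ {a′}, b) ∈ t}. Then: (1) t′(x) is a clique of E_x ⊸ F_{⟦t⟧(x)}, i.e. a linear morphism from E_x to F_{⟦t⟧(x)}; (2) for every clique u of E_x, ⟦t′(x)⟧u = ⋃_{a∈u} (⟦t⟧(x ∪ {a}) ∖ ⟦t⟧(x)), and in particular ⟦t⟧(x) and ⟦t′(x)⟧u are disjoint with ⟦t⟧(x) ∪ ⟦t′(x)⟧u ⊆ ⟦t⟧(x ∪ u); (3) t′(x) is the greatest such linear approximation: every clique h of E_x ⊸ F_{⟦t⟧(x)} satisfying ⟦h⟧u ⊆ ⟦t⟧(x ∪ u) ∖ ⟦t⟧(x) for all cliques u of E_x satisfies h ⊆ t′(x). -/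
import Mathlib


open Set

/-- `s` is a clique for the coherence relation `coh`. -/
def IsClique {γ : Type*} (coh : γ → γ → Prop) (s : Set γ) : Prop :=
  ∀ a ∈ s, ∀ a' ∈ s, coh a a'

/-- The stable function associated with a Kleisli morphism `t` (a clique of
`!E ⊸ F`): `⟦t⟧(x) = {b | ∃ x₀ ⊆ x, (x₀, b) ∈ t}`. -/
def funApp {α β : Type*} (t : Set (Set α × β)) (x : Set α) : Set β :=
  {b | ∃ x₀ ⊆ x, (x₀, b) ∈ t}

/-- The web of the coherence space `E_y` of strict extensions of a clique `y`:
all points strictly coherent with every point of `y`. -/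
def webSub {γ : Type*} (coh : γ → γ → Prop) (y : Set γ) : Set γ :=
  {c | ∀ a ∈ y, coh a c ∧ a ≠ c}

/-- The derivative `t′(x)` of a Kleisli morphism `t` at a clique `x`. -/
def cohDeriv {α β : Type*} (cohE : α → α → Prop) (t : Set (Set α × β)) (x : Set α) :
    Set (α × β) :=
  {p | p.1 ∈ webSub cohE x ∧ ∃ x₀ ⊆ x, (insert p.1 x₀, p.2) ∈ t}

/-- The application `⟦h⟧u` of a linear morphism (a set of pairs) to a clique. -/
def linApp {α β : Type*} (h : Set (α × β)) (u : Set α) : Set β :=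
  {b | ∃ a ∈ u, (a, b) ∈ h}

theorem stmt19 {α β : Type*} (cohE : α → α → Prop) (cohF : β → β → Prop)
    (hErefl : ∀ a, cohE a a) (hEsymm : ∀ a a', cohE a a' → cohE a' a)
    (hFrefl : ∀ b, cohF b b) (hFsymm : ∀ b b', cohF b b' → cohF b' b)
    (t : Set (Set α × β))
    -- `t` is a set of pairs (finite clique of `E`, point of `F`) …
    (ht_fin : ∀ p ∈ t, (p.1 : Set α).Finite)
    (ht_cl : ∀ p ∈ t, IsClique cohE p.1)
    -- … which is a clique of `!E ⊸ F`
    (ht_coh : ∀ p ∈ t, ∀ q ∈ t, IsClique cohE (p.1 ∪ q.1) →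
      cohF p.2 q.2 ∧ (p.2 = q.2 → p.1 = q.1))
    (x : Set α) (hx : IsClique cohE x) :
    -- (1) `t′(x)` is a clique of `E_x ⊸ F_{⟦t⟧(x)}`
    ((∀ p ∈ cohDeriv cohE t x, (p.2 : β) ∈ webSub cohF (funApp t x)) ∧
      (∀ p ∈ cohDeriv cohE t x, ∀ q ∈ cohDeriv cohE t x,
        cohE p.1 q.1 → cohF p.2 q.2 ∧ (p.2 = q.2 → p.1 = q.1))) ∧
    -- (2) the action of `t′(x)` on cliques of `E_x`
    (∀ u : Set α, u ⊆ webSub cohE x → IsClique cohE u →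
      linApp (cohDeriv cohE t x) u = (⋃ a ∈ u, funApp t (insert a x) \ funApp t x) ∧
      Disjoint (funApp t x) (linApp (cohDeriv cohE t x) u) ∧
      funApp t x ∪ linApp (cohDeriv cohE t x) u ⊆ funApp t (x ∪ u)) ∧
    -- (3) maximality of `t′(x)` among linear under-approximations
    (∀ h : Set (α × β),
      (∀ p ∈ h, (p.1 : α) ∈ webSub cohE x ∧ (p.2 : β) ∈ webSub cohF (funApp t x)) →
      (∀ p ∈ h, ∀ q ∈ h, cohE p.1 q.1 → cohF p.2 q.2 ∧ (p.2 = q.2 → p.1 = q.1)) →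
      (∀ u : Set α, u ⊆ webSub cohE x → IsClique cohE u →
        linApp h u ⊆ funApp t (x ∪ u) \ funApp t x) →
      h ⊆ cohDeriv cohE t x) := by
  have mono : ∀ {s s' : Set α}, s ⊆ s' → IsClique cohE s' → IsClique cohE s :=
    fun hss h a ha a' ha' => h a (hss ha) a' (hss ha')
  have bigclique : ∀ a a', a ∈ webSub cohE x → a' ∈ webSub cohE x → cohE a a' →
      IsClique cohE (insert a (insert a' x)) := by
    intro a a' ha ha' haa c hc c' hc'
    simp only [Set.mem_insert_iff] at hc hc'
    rcases hc with rfl | rfl | hc <;> rcases hc' with rfl | rfl | hc'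
    · exact hErefl _
    · exact haa
    · exact hEsymm _ _ (ha _ hc').1
    · exact hEsymm _ _ haa
    · exact hErefl _
    · exact hEsymm _ _ (ha' _ hc').1
    · exact (ha _ hc).1
    · exact (ha' _ hc).1
    · exact hx _ hc _ hc'
  have key : ∀ a a', a ∈ webSub cohE x → a' ∈ webSub cohE x → cohE a a' →
      ∀ x₀, x₀ ⊆ x → ∀ x₁, x₁ ⊆ x → ∀ b b', (insert a x₀, b) ∈ t →
      (insert a' x₁, b') ∈ t →
      cohF b b' ∧ (b = b' → insert a x₀ = insert a' x₁) := by
    intro a a' ha ha' haa x₀ h0 x₁ h1 b b' hb hb'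
    refine ht_coh _ hb _ hb' (mono ?_ (bigclique a a' ha ha' haa))
    intro c hc
    simp only [Set.mem_union, Set.mem_insert_iff] at hc
    rcases hc with (rfl | hc) | (rfl | hc)
    · exact Or.inl rfl
    · exact Or.inr (Or.inr (h0 hc))
    · exact Or.inr (Or.inl rfl)
    · exact Or.inr (Or.inr (h1 hc))
  have key2 : ∀ a, a ∈ webSub cohE x → ∀ x₀, x₀ ⊆ x → ∀ x₁, x₁ ⊆ x → ∀ b b',
      (insert a x₀, b) ∈ t → (x₁, b') ∈ t →
      cohF b b' ∧ (b = b' → insert a x₀ = x₁) := by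
    intro a ha x₀ h0 x₁ h1 b b' hb hb'
    refine ht_coh _ hb _ hb' (mono ?_ (bigclique a a ha ha (hErefl a)))
    intro c hc
    simp only [Set.mem_union, Set.mem_insert_iff] at hc
    rcases hc with (rfl | hc) | hc
    · exact Or.inl rfl
    · exact Or.inr (Or.inr (h0 hc))
    · exact Or.inr (Or.inr (h1 hc))
  have notmem : ∀ a ∈ webSub cohE x, ∀ x₀, x₀ ⊆ x → ∀ b, (insert a x₀, b) ∈ t →
      b ∉ funApp t x := by
    rintro a ha x₀ h0 b hb ⟨x₁, h1, ht1⟩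
    have heq := (key2 a ha x₀ h0 x₁ h1 b b hb ht1).2 rfl
    have hax : a ∈ x := h1 (heq ▸ Set.mem_insert a x₀)
    exact (ha a hax).2 rfl
  refine ⟨⟨?_, ?_⟩, ?_, ?_⟩
  · -- (1a)
    rintro p ⟨hpw, x₀, h0, ht0⟩ b' ⟨x₁, h1, ht1⟩
    refine ⟨hFsymm _ _ (key2 p.1 hpw x₀ h0 x₁ h1 p.2 b' ht0 ht1).1, ?_⟩
    rintro rfl
    exact notmem p.1 hpw x₀ h0 p.2 ht0 ⟨x₁, h1, ht1⟩
  · -- (1b)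
    rintro p ⟨hpw, x₀, h0, ht0⟩ q ⟨hqw, x₁, h1, ht1⟩ hpq
    obtain ⟨hF, hEq⟩ := key p.1 q.1 hpw hqw hpq x₀ h0 x₁ h1 p.2 q.2 ht0 ht1
    refine ⟨hF, fun hb => ?_⟩
    have : q.1 ∈ insert p.1 x₀ := (hEq hb) ▸ Set.mem_insert q.1 x₁
    rcases this with h | h
    · exact h.symm
    · exact absurd rfl (hqw q.1 (h0 h)).2
  · -- (2)
    intro u hu hucl
    have heq : linApp (cohDeriv cohE t x) u
        = (⋃ a ∈ u, funApp t (insert a x) \ funApp t x) := by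
      ext b
      simp only [Set.mem_iUnion, exists_prop]
      constructor
      · rintro ⟨a, hau, haw, x₀, h0, ht0⟩
        exact ⟨a, hau, ⟨insert a x₀, Set.insert_subset_insert h0, ht0⟩,
          notmem a haw x₀ h0 b ht0⟩
      · rintro ⟨a, hau, ⟨x₀, h0, ht0⟩, hnb⟩
        by_cases hax : a ∈ x₀
        · refine ⟨a, hau, hu hau, x₀ \ {a}, ?_, ?_⟩
          · rintro c ⟨hc, hca⟩
            rcases h0 hc with rfl | hc'
            · exact absurd rfl hca
            · exact hc'
          · rw [Set.insert_diff_singleton, Set.insert_eq_self.mpr hax]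
            exact ht0
        · refine absurd ⟨x₀, fun c hc => ?_, ht0⟩ hnb
          rcases h0 hc with rfl | h
          · exact absurd hc hax
          · exact h
    refine ⟨heq, ?_, ?_⟩
    · rw [Set.disjoint_left]
      rintro b hb ⟨a, hau, haw, x₀, h0, ht0⟩
      exact notmem a haw x₀ h0 b ht0 hb
    · rintro b (⟨x₀, h0, ht0⟩ | ⟨a, hau, haw, x₀, h0, ht0⟩)
      · exact ⟨x₀, h0.trans Set.subset_union_left, ht0⟩
      · exact ⟨insert a x₀, Set.insert_subset (Or.inr hau)
          (h0.trans Set.subset_union_left), ht0⟩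
  · -- (3)
    intro h hweb hcoh happ p hp
    have ha := (hweb p hp).1
    have hsub : ({p.1} : Set α) ⊆ webSub cohE x := by
      rintro c rfl; exact ha
    have hcl : IsClique cohE ({p.1} : Set α) := by
      rintro c rfl c' rfl; exact hErefl _
    have hb : p.2 ∈ linApp h {p.1} := ⟨p.1, rfl, hp⟩
    obtain ⟨⟨x₀, h0, ht0⟩, hnb⟩ := happ {p.1} hsub hcl hb
    by_cases hax : p.1 ∈ x₀
    · refine ⟨ha, x₀ \ {p.1}, ?_, ?_⟩
      · rintro c ⟨hc, hca⟩
        rcases h0 hc with hc' | rfl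
        · exact hc'
        · exact absurd rfl hca
      · rw [Set.insert_diff_singleton, Set.insert_eq_self.mpr hax]
        exact ht0
    · refine absurd ⟨x₀, fun c hc => ?_, ht0⟩ hnb
      rcases h0 hc with h' | rfl
      · exact h'
      · exact absurd hc hax
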